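/- Let (C₁, C₂) have joint density proportional to exp(−(c₁ − α c₂)²/(2σ²)) on [0,a]×[0,b] with α = b/a > 0. Then the mutual information I(C₁; C₂) is strictly positive, and I(C₁;C₂) → 0 as σ → ∞. -/

import Mathlib

open MeasureTheory Real Filter

open Classical in
/-- Kullback–Leibler divergence: `∫ log (dμ/dν) dμ` if `μ ≪ ν`, and `+∞` otherwise. -/
noncomputable def klDiv {α : Type*} [MeasurableSpace α] (μ ν : Measure α) : EReal :=
  if μ ≪ ν then ((∫ x, Real.log ((μ.rnDeriv ν x).toReal) ∂μ : ℝ) : EReal) else ⊤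

/-- Mutual information `I(C₁;C₂) = D_KL(p_{C₁,C₂} ‖ p_{C₁} ⊗ p_{C₂})`. -/
noncomputable def mutualInfo (μ : Measure (ℝ × ℝ)) : EReal :=
  klDiv μ ((μ.map Prod.fst).prod (μ.map Prod.snd))

open scoped ENNReal NNReal

lemma map_fst_wd {ρ₁ ρ₂ : Measure ℝ} [SigmaFinite ρ₁] [SigmaFinite ρ₂]
    {g : ℝ × ℝ → ℝ≥0∞} (hg : Measurable g) :
    ((ρ₁.prod ρ₂).withDensity g).map Prod.fst
      = ρ₁.withDensity (fun x => ∫⁻ y, g (x, y) ∂ρ₂) := by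
  ext s hs
  have hpre : (Prod.fst ⁻¹' s : Set (ℝ × ℝ)) = s ×ˢ Set.univ := by ext p; simp
  rw [Measure.map_apply measurable_fst hs, withDensity_apply _ hs, hpre,
    withDensity_apply _ (hs.prod MeasurableSet.univ), ← Measure.prod_restrict,
    Measure.restrict_univ, lintegral_prod _ hg.aemeasurable]

lemma map_snd_wd {ρ₁ ρ₂ : Measure ℝ} [SigmaFinite ρ₁] [SigmaFinite ρ₂]
    {g : ℝ × ℝ → ℝ≥0∞} (hg : Measurable g) :
    ((ρ₁.prod ρ₂).withDensity g).map Prod.snd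
      = ρ₂.withDensity (fun y => ∫⁻ x, g (x, y) ∂ρ₁) := by
  ext s hs
  have hpre : (Prod.snd ⁻¹' s : Set (ℝ × ℝ)) = Set.univ ×ˢ s := by ext p; simp
  rw [Measure.map_apply measurable_snd hs, withDensity_apply _ hs, hpre,
    withDensity_apply _ (MeasurableSet.univ.prod hs), ← Measure.prod_restrict,
    Measure.restrict_univ, lintegral_prod_symm _ hg.aemeasurable]

lemma prod_wd {ρ₁ ρ₂ : Measure ℝ} [SigmaFinite ρ₁] [SigmaFinite ρ₂]
    {f₁ f₂ : ℝ → ℝ≥0∞} (h₁ : Measurable f₁) (h₂ : Measurable f₂)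
    [SigmaFinite (ρ₁.withDensity f₁)] [SigmaFinite (ρ₂.withDensity f₂)] :
    (ρ₁.withDensity f₁).prod (ρ₂.withDensity f₂)
      = (ρ₁.prod ρ₂).withDensity (fun p => f₁ p.1 * f₂ p.2) := by
  refine Measure.prod_eq fun s t hs ht => ?_
  rw [withDensity_apply _ (hs.prod ht), ← Measure.prod_restrict,
    lintegral_prod_mul h₁.aemeasurable h₂.aemeasurable,
    withDensity_apply _ hs, withDensity_apply _ ht]

lemma two_points {l : ℝ} (hl : 0 < l) {P : ℝ → Prop}
    (h : ∀ᵐ x ∂(volume.restrict (Set.Icc 0 l)), P x) :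
    ∃ x₁ x₂ : ℝ, x₁ ≠ x₂ ∧ P x₁ ∧ P x₂ := by
  by_contra hcon
  have hsub : {x : ℝ | P x}.Subsingleton := by
    intro x hx y hy; by_contra hne; exact hcon ⟨x, y, hne, hx, hy⟩
  have h0 : (volume.restrict (Set.Icc (0:ℝ) l)) {x | ¬ P x} = 0 := h
  have h1 : (volume.restrict (Set.Icc (0:ℝ) l)) {x | P x} = 0 :=
    le_antisymm ((Measure.restrict_le_self _).trans_eq (hsub.measure_zero volume)) zero_le
  have huniv : (volume.restrict (Set.Icc (0:ℝ) l)) Set.univ = 0 := by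
    refine le_antisymm ?_ zero_le
    have : (Set.univ : Set ℝ) ⊆ {x | P x} ∪ {x | ¬ P x} := by
      intro x _; by_cases hx : P x
      · exact Or.inl hx
      · exact Or.inr hx
    calc (volume.restrict (Set.Icc (0:ℝ) l)) Set.univ
        ≤ (volume.restrict (Set.Icc (0:ℝ) l)) ({x | P x} ∪ {x | ¬ P x}) := measure_mono this
      _ ≤ _ + _ := measure_union_le _ _
      _ = 0 := by rw [h0, h1, add_zero]
  rw [Measure.restrict_apply_univ, Real.volume_Icc] at huniv
  simp only [sub_zero] at huniv
  exact absurd huniv (by simp [ENNReal.ofReal_eq_zero, not_le, hl])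

set_option maxHeartbeats 2000000 in
lemma key (a b α σ c : ℝ) (ha : 0 < a) (hb : 0 < b) (hαp : 0 < α) (hc : 0 < c) (hσ : 0 < σ)
    (m : Measure (ℝ × ℝ))
    (hm : m = (volume.restrict (Set.Icc 0 a ×ˢ Set.Icc 0 b)).withDensity
      (fun p => ENNReal.ofReal (c * Real.exp (-(p.1 - α * p.2) ^ 2 / (2 * σ ^ 2)))))
    (hprob : IsProbabilityMeasure m) :
    0 < mutualInfo m ∧ mutualInfo m ≤ (((max a (α * b)) ^ 2 / σ ^ 2 : ℝ) : EReal) := by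
  -- notation
  set I₁ : Set ℝ := Set.Icc 0 a with hI₁
  set I₂ : Set ℝ := Set.Icc 0 b with hI₂
  set ρ₁ : Measure ℝ := volume.restrict I₁ with hρ₁
  set ρ₂ : Measure ℝ := volume.restrict I₂ with hρ₂
  set gR : ℝ × ℝ → ℝ := fun p => c * Real.exp (-(p.1 - α * p.2) ^ 2 / (2 * σ ^ 2)) with hgR
  set g : ℝ × ℝ → ℝ≥0∞ := fun p => ENNReal.ofReal (gR p) with hg
  set M : ℝ := (max a (α * b)) ^ 2 with hM
  set t : ℝ := M / (2 * σ ^ 2) with ht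
  set e : ℝ := Real.exp (-t) with he
  have hσ2 : (0:ℝ) < 2 * σ ^ 2 := by positivity
  have hMpos : 0 < M := by positivity
  have htpos : 0 < t := by positivity
  have hepos : 0 < e := Real.exp_pos _
  have hele : e ≤ 1 := Real.exp_le_one_iff.2 (by linarith)
  -- gR positivity and bounds
  have hgRpos : ∀ p, 0 < gR p := fun p => by positivity
  have hgRle : ∀ p, gR p ≤ c := by
    intro p
    simp only [hgR]
    have h1 : Real.exp (-(p.1 - α * p.2) ^ 2 / (2 * σ ^ 2)) ≤ 1 := by
      apply Real.exp_le_one_iff.2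
      apply div_nonpos_of_nonpos_of_nonneg <;> nlinarith [sq_nonneg (p.1 - α * p.2)]
    nlinarith [Real.exp_pos (-(p.1 - α * p.2) ^ 2 / (2 * σ ^ 2))]
  have hgRge : ∀ p ∈ I₁ ×ˢ I₂, c * e ≤ gR p := by
    intro p hp
    obtain ⟨⟨h1, h2⟩, ⟨h3, h4⟩⟩ := hp
    have hsq : (p.1 - α * p.2) ^ 2 ≤ M := by
      have hma : a ≤ max a (α * b) := le_max_left _ _
      have hmb : α * b ≤ max a (α * b) := le_max_right _ _
      have h5 : α * p.2 ≤ α * b := by nlinarith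
      have h6 : 0 ≤ α * p.2 := by positivity
      rw [hM]
      apply sq_le_sq' <;> nlinarith
    have hexp : -t ≤ -(p.1 - α * p.2) ^ 2 / (2 * σ ^ 2) := by
      rw [ht, neg_div]
      exact neg_le_neg (by gcongr)
    have hee := Real.exp_le_exp.2 hexp
    simp only [hgR, he]
    exact mul_le_mul_of_nonneg_left hee hc.le
  -- measurability and measure identities
  have hgRc : Continuous gR := by rw [hgR]; fun_prop
  have hgm : Measurable g := by
    rw [hg]; exact ENNReal.measurable_ofReal.comp hgRc.measurable
  have hbase : volume.restrict (I₁ ×ˢ I₂) = ρ₁.prod ρ₂ := by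
    rw [hρ₁, hρ₂, Measure.prod_restrict, ← Measure.volume_eq_prod]
  have hm' : m = (ρ₁.prod ρ₂).withDensity g := by rw [hm, hbase]
  set F₁ : ℝ → ℝ≥0∞ := fun x => ∫⁻ y, g (x, y) ∂ρ₂ with hF₁
  set F₂ : ℝ → ℝ≥0∞ := fun y => ∫⁻ x, g (x, y) ∂ρ₁ with hF₂
  have hF₁m : Measurable F₁ := hgm.lintegral_prod_right'
  have hF₂m : Measurable F₂ := hgm.lintegral_prod_left'
  have hmap₁ : m.map Prod.fst = ρ₁.withDensity F₁ := by rw [hm']; exact map_fst_wd hgm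
  have hmap₂ : m.map Prod.snd = ρ₂.withDensity F₂ := by rw [hm']; exact map_snd_wd hgm
  haveI hP₁ : IsProbabilityMeasure (ρ₁.withDensity F₁) :=
    hmap₁ ▸ Measure.isProbabilityMeasure_map measurable_fst.aemeasurable
  haveI hP₂ : IsProbabilityMeasure (ρ₂.withDensity F₂) :=
    hmap₂ ▸ Measure.isProbabilityMeasure_map measurable_snd.aemeasurable
  set ν : Measure (ℝ × ℝ) := (m.map Prod.fst).prod (m.map Prod.snd) with hν
  set h : ℝ × ℝ → ℝ≥0∞ := fun p => F₁ p.1 * F₂ p.2 with hh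
  have hhm : Measurable h := by
    rw [hh]; exact (hF₁m.comp measurable_fst).mul (hF₂m.comp measurable_snd)
  have hν' : ν = (ρ₁.prod ρ₂).withDensity h := by
    rw [hν, hmap₁, hmap₂, hh]; exact prod_wd hF₁m hF₂m
  haveI hPν : IsProbabilityMeasure ν := by
    rw [hν, hmap₁, hmap₂]; infer_instance
  -- measure of intervals
  have hρ₁univ : ρ₁ Set.univ = ENNReal.ofReal a := by
    rw [hρ₁, Measure.restrict_apply_univ, hI₁, Real.volume_Icc, sub_zero]
  have hρ₂univ : ρ₂ Set.univ = ENNReal.ofReal b := by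
    rw [hρ₂, Measure.restrict_apply_univ, hI₂, Real.volume_Icc, sub_zero]
  have hbuniv : (ρ₁.prod ρ₂) Set.univ = ENNReal.ofReal a * ENNReal.ofReal b := by
    rw [← Set.univ_prod_univ, Measure.prod_prod, hρ₁univ, hρ₂univ]
  -- bounds on F₁ F₂
  have hF₁le : ∀ x, F₁ x ≤ ENNReal.ofReal (c * b) := by
    intro x
    calc F₁ x ≤ ∫⁻ _, ENNReal.ofReal c ∂ρ₂ :=
          lintegral_mono fun y => by
            simp only [hg]; exact ENNReal.ofReal_le_ofReal (hgRle _)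
      _ = ENNReal.ofReal c * ρ₂ Set.univ := lintegral_const _
      _ = ENNReal.ofReal (c * b) := by rw [hρ₂univ, ← ENNReal.ofReal_mul hc.le]
  have hF₂le : ∀ y, F₂ y ≤ ENNReal.ofReal (c * a) := by
    intro y
    calc F₂ y ≤ ∫⁻ _, ENNReal.ofReal c ∂ρ₁ :=
          lintegral_mono fun x => by
            simp only [hg]; exact ENNReal.ofReal_le_ofReal (hgRle _)
      _ = ENNReal.ofReal c * ρ₁ Set.univ := lintegral_const _
      _ = ENNReal.ofReal (c * a) := by rw [hρ₁univ, ← ENNReal.ofReal_mul hc.le]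
  have hF₁ge : ∀ x ∈ I₁, ENNReal.ofReal (c * e * b) ≤ F₁ x := by
    intro x hx
    have hmono : ∫⁻ _, ENNReal.ofReal (c * e) ∂ρ₂ ≤ F₁ x := by
      refine lintegral_mono_ae ?_
      rw [hρ₂, hI₂]
      refine (ae_restrict_iff' measurableSet_Icc).2 (Filter.Eventually.of_forall fun y hy => ?_)
      simp only [hg]
      exact ENNReal.ofReal_le_ofReal (hgRge (x, y) ⟨hx, hy⟩)
    calc ENNReal.ofReal (c * e * b) = ENNReal.ofReal (c * e) * ρ₂ Set.univ := by
          rw [hρ₂univ, ← ENNReal.ofReal_mul (by positivity)]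
      _ = ∫⁻ _, ENNReal.ofReal (c * e) ∂ρ₂ := (lintegral_const _).symm
      _ ≤ F₁ x := hmono
  have hF₂ge : ∀ y ∈ I₂, ENNReal.ofReal (c * e * a) ≤ F₂ y := by
    intro y hy
    have hmono : ∫⁻ _, ENNReal.ofReal (c * e) ∂ρ₁ ≤ F₂ y := by
      refine lintegral_mono_ae ?_
      rw [hρ₁, hI₁]
      refine (ae_restrict_iff' measurableSet_Icc).2 (Filter.Eventually.of_forall fun x hx => ?_)
      simp only [hg]
      exact ENNReal.ofReal_le_ofReal (hgRge (x, y) ⟨hx, hy⟩)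
    calc ENNReal.ofReal (c * e * a) = ENNReal.ofReal (c * e) * ρ₁ Set.univ := by
          rw [hρ₁univ, ← ENNReal.ofReal_mul (by positivity)]
      _ = ∫⁻ _, ENNReal.ofReal (c * e) ∂ρ₁ := (lintegral_const _).symm
      _ ≤ F₂ y := hmono
  have hF₁top : ∀ x, F₁ x ≠ ∞ := fun x => ((hF₁le x).trans_lt ENNReal.ofReal_lt_top).ne
  have hF₂top : ∀ y, F₂ y ≠ ∞ := fun y => ((hF₂le y).trans_lt ENNReal.ofReal_lt_top).ne
  -- total mass constraints
  have hmass : ∫⁻ p, g p ∂(ρ₁.prod ρ₂) = 1 := by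
    have : m Set.univ = 1 := measure_univ
    rw [hm', withDensity_apply _ MeasurableSet.univ, Measure.restrict_univ] at this
    exact this
  have hcab1 : 1 ≤ c * a * b := by
    have hle : (1 : ℝ≥0∞) ≤ ENNReal.ofReal (c * a * b) := by
      rw [← hmass]
      calc ∫⁻ p, g p ∂(ρ₁.prod ρ₂) ≤ ∫⁻ _, ENNReal.ofReal c ∂(ρ₁.prod ρ₂) :=
            lintegral_mono fun p => by
              simp only [hg]; exact ENNReal.ofReal_le_ofReal (hgRle _)
        _ = ENNReal.ofReal c * (ENNReal.ofReal a * ENNReal.ofReal b) := by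
            rw [lintegral_const, hbuniv]
        _ = ENNReal.ofReal (c * a * b) := by
            rw [← ENNReal.ofReal_mul ha.le, ← ENNReal.ofReal_mul (by positivity : (0:ℝ) ≤ c)]
            ring_nf
    have := ENNReal.one_le_ofReal.mp hle
    linarith
  have hceab1 : c * e * a * b ≤ 1 := by
    have hle : ENNReal.ofReal (c * e * a * b) ≤ 1 := by
      rw [← hmass]
      have hmono : ∫⁻ _, ENNReal.ofReal (c * e) ∂(ρ₁.prod ρ₂) ≤ ∫⁻ p, g p ∂(ρ₁.prod ρ₂) := by
        refine lintegral_mono_ae ?_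
        rw [← hbase]
        refine ((ae_restrict_mem ((measurableSet_Icc.prod measurableSet_Icc))).mono
          fun p hp => ?_)
        simp only [hg]
        exact ENNReal.ofReal_le_ofReal (hgRge p hp)
      calc ENNReal.ofReal (c * e * a * b)
          = ENNReal.ofReal (c * e) * (ENNReal.ofReal a * ENNReal.ofReal b) := by
            rw [← ENNReal.ofReal_mul ha.le, ← ENNReal.ofReal_mul (by positivity)]; ring_nf
        _ = ∫⁻ _, ENNReal.ofReal (c * e) ∂(ρ₁.prod ρ₂) := by rw [lintegral_const, hbuniv]
        _ ≤ _ := hmono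
    exact ENNReal.ofReal_le_one.mp hle
  -- positivity of h, absolute continuity
  have haein : ∀ᵐ p ∂(ρ₁.prod ρ₂), p ∈ I₁ ×ˢ I₂ := by
    rw [← hbase, hI₁, hI₂]
    exact ae_restrict_mem (measurableSet_Icc.prod measurableSet_Icc)
  have hhtop : ∀ p, h p ≠ ∞ := fun p => ENNReal.mul_ne_top (hF₁top _) (hF₂top _)
  have hh0 : ∀ᵐ p ∂(ρ₁.prod ρ₂), h p ≠ 0 := by
    refine haein.mono fun p hp => ?_
    simp only [hh]
    have h1 := lt_of_lt_of_le (ENNReal.ofReal_pos.2 (by positivity : (0:ℝ) < c * e * b))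
      (hF₁ge p.1 hp.1)
    have h2 := lt_of_lt_of_le (ENNReal.ofReal_pos.2 (by positivity : (0:ℝ) < c * e * a))
      (hF₂ge p.2 hp.2)
    exact mul_ne_zero h1.ne' h2.ne'
  have hg0 : ∀ p, g p ≠ 0 := fun p => (ENNReal.ofReal_pos.2 (hgRpos p)).ne'
  have habs : m ≪ ν := by
    rw [hm', hν']
    exact (withDensity_absolutelyContinuous _ _).trans
      (withDensity_absolutelyContinuous' hhm.aemeasurable hh0)
  have hbm : (ρ₁.prod ρ₂) ≪ m := by
    rw [hm']
    exact withDensity_absolutelyContinuous' hgm.aemeasurable (Filter.Eventually.of_forall hg0)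
  -- Radon-Nikodym derivative
  have hmν : ν.withDensity (fun p => g p * (h p)⁻¹) = m := by
    rw [hν', ← withDensity_mul₀ (g := fun p => g p * (h p)⁻¹) hhm.aemeasurable (hgm.mul hhm.inv).aemeasurable, hm']
    refine withDensity_congr_ae ?_
    filter_upwards [hh0] with p hp
    show h p * (g p * (h p)⁻¹) = g p
    rw [mul_comm (h p), mul_assoc, ENNReal.inv_mul_cancel hp (hhtop p), mul_one]
  have hrn : m.rnDeriv ν =ᵐ[ν] fun p => g p * (h p)⁻¹ := by
    have := Measure.rnDeriv_withDensity ν (f := fun p => g p * (h p)⁻¹) (hgm.mul hhm.inv)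
    rwa [hmν] at this
  have hrnm : m.rnDeriv ν =ᵐ[m] fun p => g p * (h p)⁻¹ := habs.ae_eq hrn
  -- real-valued densities and ratio
  set f₁ : ℝ → ℝ := fun x => (F₁ x).toReal with hf₁
  set f₂ : ℝ → ℝ := fun y => (F₂ y).toReal with hf₂
  have hf₁m : Measurable f₁ := hF₁m.ennreal_toReal
  have hf₂m : Measurable f₂ := hF₂m.ennreal_toReal
  set Rf : ℝ × ℝ → ℝ := fun p => gR p / (f₁ p.1 * f₂ p.2) with hRf
  have hRfm : Measurable Rf := by
    rw [hRf]
    exact hgRc.measurable.div ((hf₁m.comp measurable_fst).mul (hf₂m.comp measurable_snd))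
  have htoReal : ∀ p, ((g p) * (h p)⁻¹).toReal = Rf p := by
    intro p
    simp only [hRf, hg, hh, hf₁, hf₂, div_eq_mul_inv]
    rw [ENNReal.toReal_mul, ENNReal.toReal_inv, ENNReal.toReal_ofReal (hgRpos p).le,
      ENNReal.toReal_mul]
  -- real bounds on f₁ f₂
  have hf₁u : ∀ x, f₁ x ≤ c * b := fun x =>
    ENNReal.toReal_le_of_le_ofReal (by positivity) (hF₁le x)
  have hf₂u : ∀ y, f₂ y ≤ c * a := fun y =>
    ENNReal.toReal_le_of_le_ofReal (by positivity) (hF₂le y)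
  have hf₁l : ∀ x ∈ I₁, c * e * b ≤ f₁ x := fun x hx =>
    (ENNReal.ofReal_le_iff_le_toReal (hF₁top x)).mp (hF₁ge x hx)
  have hf₂l : ∀ y ∈ I₂, c * e * a ≤ f₂ y := fun y hy =>
    (ENNReal.ofReal_le_iff_le_toReal (hF₂top y)).mp (hF₂ge y hy)
  -- ratio bounds on the rectangle
  have hRfbound : ∀ p ∈ I₁ ×ˢ I₂, e ^ 2 ≤ Rf p ∧ Rf p ≤ (e ^ 2)⁻¹ ∧ 0 < Rf p := by
    intro p hp
    have hd1l := hf₁l p.1 hp.1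
    have hd2l := hf₂l p.2 hp.2
    have hd1u := hf₁u p.1
    have hd2u := hf₂u p.2
    have hd1p : 0 < f₁ p.1 := lt_of_lt_of_le (by positivity) hd1l
    have hd2p : 0 < f₂ p.2 := lt_of_lt_of_le (by positivity) hd2l
    have hdp : 0 < f₁ p.1 * f₂ p.2 := mul_pos hd1p hd2p
    have hgl := hgRge p hp
    have hgu := hgRle p
    have hgp := hgRpos p
    refine ⟨?_, ?_, by positivity⟩
    · simp only [hRf]; rw [le_div_iff₀ hdp]
      have hdd : f₁ p.1 * f₂ p.2 ≤ (c * b) * (c * a) :=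
        mul_le_mul hd1u hd2u hd2p.le (by positivity)
      nlinarith [mul_le_mul_of_nonneg_left hceab1 (mul_pos hc hepos).le,
        mul_le_mul_of_nonneg_left hdd (by positivity : (0:ℝ) ≤ e ^ 2)]
    · simp only [hRf]; rw [div_le_iff₀ hdp]
      have hdd : (c * e * b) * (c * e * a) ≤ f₁ p.1 * f₂ p.2 :=
        mul_le_mul hd1l hd2l (by positivity) hd1p.le
      have hsq : e ^ 2 * gR p ≤ f₁ p.1 * f₂ p.2 := by
        nlinarith [mul_le_mul_of_nonneg_left hcab1 (by positivity : (0:ℝ) ≤ c * e ^ 2)]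
      rw [inv_mul_eq_div, le_div_iff₀ (by positivity : (0:ℝ) < e ^ 2)]
      linarith
  -- a.e. membership under m
  have hmb : m ≪ ρ₁.prod ρ₂ := by rw [hm']; exact withDensity_absolutelyContinuous _ _
  have haem : ∀ᵐ p ∂m, p ∈ I₁ ×ˢ I₂ := hmb.ae_le haein
  -- mutualInfo as a real integral
  set W : ℝ × ℝ → ℝ := fun p => Real.log (Rf p) with hW
  have hWm : Measurable W := by rw [hW]; exact Real.measurable_log.comp hRfm
  have hMI : mutualInfo m = ((∫ p, W p ∂m : ℝ) : EReal) := by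
    unfold mutualInfo klDiv
    rw [← hν, if_pos habs]
    congr 1
    refine integral_congr_ae ?_
    filter_upwards [hrnm] with p hp
    rw [hp, htoReal p]
  have he2 : e ^ 2 = Real.exp (-(2 * t)) := by
    rw [pow_two, he, ← Real.exp_add]
    congr 1; ring
  have he2inv : (e ^ 2)⁻¹ = Real.exp (2 * t) := by
    rw [he2, ← Real.exp_neg, neg_neg]
  -- bound on W
  have haebound : ∀ᵐ p ∂m, |W p| ≤ 2 * t := by
    refine haem.mono fun p hp => ?_
    obtain ⟨hl, hu, hpos⟩ := hRfbound p hp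
    rw [he2] at hl
    rw [he2inv] at hu
    have h1 : -(2 * t) ≤ Real.log (Rf p) := (Real.le_log_iff_exp_le hpos).2 hl
    have h2 : Real.log (Rf p) ≤ 2 * t := (Real.log_le_iff_le_exp hpos).2 hu
    exact abs_le.2 ⟨h1, h2⟩
  have hWint : Integrable W m :=
    (integrable_const (2 * t)).mono' hWm.aestronglyMeasurable
      (haebound.mono fun p hp => by simpa [Real.norm_eq_abs] using hp)
  -- upper bound
  have hWle : |∫ p, W p ∂m| ≤ 2 * t := by
    have := norm_integral_le_of_norm_le_const (μ := m) (f := W) (C := 2 * t)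
      (haebound.mono fun p hp => by simpa [Real.norm_eq_abs] using hp)
    simpa [Real.norm_eq_abs, measure_univ] using this
  have h2t : 2 * t = M / σ ^ 2 := by rw [ht]; field_simp
  have hub : mutualInfo m ≤ ((M / σ ^ 2 : ℝ) : EReal) := by
    rw [hMI, ← h2t]
    exact_mod_cast (abs_le.1 hWle).2
  -- Gibbs inequality setup
  set V : ℝ × ℝ → ℝ := fun p => 1 - (Rf p)⁻¹ with hV
  have hVm : Measurable V := by rw [hV]; exact measurable_const.sub hRfm.inv
  have hVbound : ∀ᵐ p ∂m, ‖V p‖ ≤ 1 + (e ^ 2)⁻¹ := by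
    refine haem.mono fun p hp => ?_
    obtain ⟨hl, hu, hpos⟩ := hRfbound p hp
    have hinvpos : 0 < (Rf p)⁻¹ := by positivity
    have hinvle : (Rf p)⁻¹ ≤ (e ^ 2)⁻¹ := by
      apply inv_anti₀ (by positivity) hl
    rw [Real.norm_eq_abs, hV]
    rw [abs_le]
    constructor <;> simp only [] <;> nlinarith
  have hVint : Integrable V m :=
    (integrable_const (1 + (e ^ 2)⁻¹)).mono' hVm.aestronglyMeasurable hVbound
  -- ∫ Rf⁻¹ dm = 1
  have hνuniv : ∫⁻ p, h p ∂(ρ₁.prod ρ₂) = 1 := by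
    have huniv : ν Set.univ = 1 := measure_univ
    rwa [hν', withDensity_apply _ MeasurableSet.univ, Measure.restrict_univ] at huniv
  have hinvint : ∫ p, (Rf p)⁻¹ ∂m = 1 := by
    have hsmul : ∫ p, (Rf p)⁻¹ ∂m
        = ∫ p, ((gR p).toNNReal : ℝ) • (Rf p)⁻¹ ∂(ρ₁.prod ρ₂) := by
      rw [hm']
      have : g = fun p => ((gR p).toNNReal : ℝ≥0∞) := by
        funext p; rw [hg]; rfl
      rw [this]
      
      exact integral_withDensity_eq_integral_smul
        (hgRc.measurable.real_toNNReal) _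
    rw [hsmul]
    have hcongr : ∫ p, ((gR p).toNNReal : ℝ) • (Rf p)⁻¹ ∂(ρ₁.prod ρ₂)
        = ∫ p, f₁ p.1 * f₂ p.2 ∂(ρ₁.prod ρ₂) := by
      refine integral_congr_ae (haein.mono fun p hp => ?_)
      obtain ⟨hl, hu, hpos⟩ := hRfbound p hp
      have hd1p : 0 < f₁ p.1 := lt_of_lt_of_le (by positivity) (hf₁l p.1 hp.1)
      have hd2p : 0 < f₂ p.2 := lt_of_lt_of_le (by positivity) (hf₂l p.2 hp.2)
      have hgp := hgRpos p
      simp only [smul_eq_mul, Real.coe_toNNReal _ hgp.le, hRf]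
      rw [inv_div, div_eq_mul_inv, ← mul_assoc, mul_comm (gR p), mul_assoc,
        mul_inv_cancel₀ hgp.ne', mul_one]
    rw [hcongr]
    have htoR : ∫ p, f₁ p.1 * f₂ p.2 ∂(ρ₁.prod ρ₂)
        = (∫⁻ p, h p ∂(ρ₁.prod ρ₂)).toReal := by
      rw [← integral_toReal hhm.aemeasurable
        (Filter.Eventually.of_forall fun p => lt_top_iff_ne_top.2 (hhtop p))]
      refine integral_congr_ae (Filter.Eventually.of_forall fun p => ?_)
      rw [hh]
      show f₁ p.1 * f₂ p.2 = (F₁ p.1 * F₂ p.2).toReal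
      rw [ENNReal.toReal_mul, hf₁, hf₂]
    rw [htoR, hνuniv, ENNReal.toReal_one]
  have hVzero : ∫ p, V p ∂m = 0 := by
    rw [hV]
    have : ∫ p, (1 - (Rf p)⁻¹) ∂m = ∫ _, (1:ℝ) ∂m - ∫ p, (Rf p)⁻¹ ∂m :=
      integral_sub (integrable_const 1) (by
        refine (integrable_const ((e ^ 2)⁻¹)).mono'
          hRfm.inv.aestronglyMeasurable (haem.mono fun p hp => ?_)
        obtain ⟨hl, hu, hpos⟩ := hRfbound p hp
        rw [Real.norm_eq_abs, abs_of_pos (by positivity)]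
        exact inv_anti₀ (by positivity) hl)
    rw [this, hinvint, integral_const, probReal_univ]
    simp
  -- Gibbs: V ≤ W with strictness
  have hWV : ∀ᵐ p ∂m, V p ≤ W p ∧ (Rf p ≠ 1 → V p < W p) := by
    refine haem.mono fun p hp => ?_
    obtain ⟨hl, hu, hpos⟩ := hRfbound p hp
    have hinvpos : 0 < (Rf p)⁻¹ := by positivity
    constructor
    · have := Real.log_le_sub_one_of_pos hinvpos
      rw [Real.log_inv] at this
      simp only [hV, hW]
      linarith
    · intro hne
      have := Real.log_lt_sub_one_of_pos hinvpos (by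
        simpa [inv_eq_one] using hne)
      rw [Real.log_inv] at this
      simp only [hV, hW]
      linarith
  have hnonneg : 0 ≤ ∫ p, W p ∂m := by
    have hsub : ∫ p, (W p - V p) ∂m = ∫ p, W p ∂m := by
      rw [integral_sub hWint hVint, hVzero, sub_zero]
    rw [← hsub]
    exact integral_nonneg_of_ae (hWV.mono fun p hp => sub_nonneg.2 hp.1)
  -- strict positivity
  have hne : ∫ p, W p ∂m ≠ 0 := by
    intro h0
    have hsub : ∫ p, (W p - V p) ∂m = 0 := by
      rw [integral_sub hWint hVint, hVzero, sub_zero, h0]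
    have hae0 : (fun p => W p - V p) =ᵐ[m] 0 :=
      (integral_eq_zero_iff_of_nonneg_ae (hWV.mono fun p hp => sub_nonneg.2 hp.1)
        (hWint.sub hVint)).1 hsub
    have hRf1 : ∀ᵐ p ∂m, Rf p = 1 := by
      filter_upwards [hae0, hWV] with p h1 h2
      by_contra hne1
      have := h2.2 hne1
      have : W p - V p > 0 := by linarith
      simp only [Pi.zero_apply] at h1
      linarith
    have hfact : ∀ᵐ p ∂(ρ₁.prod ρ₂), gR p = f₁ p.1 * f₂ p.2 := by
      filter_upwards [hbm.ae_le hRf1, haein] with p h1 hp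
      have hd1p : 0 < f₁ p.1 := lt_of_lt_of_le (by positivity) (hf₁l p.1 hp.1)
      have hd2p : 0 < f₂ p.2 := lt_of_lt_of_le (by positivity) (hf₂l p.2 hp.2)
      have : Rf p = gR p / (f₁ p.1 * f₂ p.2) := by rw [hRf]
      rw [this, div_eq_one_iff_eq (by positivity)] at h1
      exact h1
    have hiter : ∀ᵐ x ∂ρ₁, ∀ᵐ y ∂ρ₂, gR (x, y) = f₁ x * f₂ y :=
      Measure.ae_ae_of_ae_prod hfact
    rw [hρ₁, hI₁] at hiter
    obtain ⟨x₁, x₂, hx12, hx₁, hx₂⟩ := two_points ha hiter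
    have hxx : ∀ᵐ y ∂ρ₂, gR (x₁, y) = f₁ x₁ * f₂ y ∧ gR (x₂, y) = f₁ x₂ * f₂ y :=
      hx₁.and hx₂
    rw [hρ₂, hI₂] at hxx
    obtain ⟨y₁, y₂, hy12, ⟨e11, e21⟩, ⟨e12, e22⟩⟩ := two_points hb hxx
    have hprod : gR (x₁, y₁) * gR (x₂, y₂) = gR (x₁, y₂) * gR (x₂, y₁) := by
      rw [e11, e22, e12, e21]; ring
    simp only [hgR] at hprod
    have hexp : Real.exp (-(x₁ - α * y₁) ^ 2 / (2 * σ ^ 2) + -(x₂ - α * y₂) ^ 2 / (2 * σ ^ 2))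
        = Real.exp (-(x₁ - α * y₂) ^ 2 / (2 * σ ^ 2) + -(x₂ - α * y₁) ^ 2 / (2 * σ ^ 2)) := by
      rw [Real.exp_add, Real.exp_add]
      have hc2 : (c : ℝ) * c ≠ 0 := by positivity
      apply mul_left_cancel₀ hc2
      nlinarith [hprod]
    have hquad := Real.exp_eq_exp.1 hexp
    have hzero' : σ ^ 2 * (α * ((x₁ - x₂) * (y₁ - y₂))) = 0 := by
      have hs : (2 * σ ^ 2) ≠ 0 := hσ2.ne'
      field_simp at hquad
      linear_combination (σ ^ 2 / 2) * hquad
    rcases mul_eq_zero.1 hzero' with h | h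
    · exact absurd h (by positivity)
    rcases mul_eq_zero.1 h with h | h
    · exact hαp.ne' h
    rcases mul_eq_zero.1 h with h' | h'
    · exact hx12 (sub_eq_zero.1 h')
    · exact hy12 (sub_eq_zero.1 h')
  refine ⟨?_, hub⟩
  rw [hMI]
  exact_mod_cast lt_of_le_of_ne hnonneg (Ne.symm hne)

/-- for `(C₁,C₂)` with joint density proportional to
`exp(−(c₁ − α c₂)²/(2σ²))` on `[0,a]×[0,b]`, `α = b/a > 0`, the mutual information
`I(C₁;C₂)` is strictly positive for every finite `σ > 0`, and `I(C₁;C₂) → 0` as `σ → ∞`. -/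
theorem mutualInfo_pos_and_tendsto_zero
    (a b : ℝ) (ha : 0 < a) (hb : 0 < b) (α : ℝ) (hα : α = b / a)
    (K : ℝ → ℝ) (hK : ∀ σ, 0 < K σ)
    (μ : ℝ → Measure (ℝ × ℝ))
    (hμ : ∀ σ, μ σ = (volume.restrict (Set.Icc 0 a ×ˢ Set.Icc 0 b)).withDensity
      (fun p => ENNReal.ofReal (K σ * Real.exp (-(p.1 - α * p.2) ^ 2 / (2 * σ ^ 2)))))
    (hprob : ∀ σ, 0 < σ → IsProbabilityMeasure (μ σ)) :
    (∀ σ : ℝ, 0 < σ → 0 < mutualInfo (μ σ)) ∧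
      Tendsto (fun σ => mutualInfo (μ σ)) atTop (nhds 0) := by
  have hα0 : 0 < α := by rw [hα]; positivity
  have hkey : ∀ σ : ℝ, 0 < σ → 0 < mutualInfo (μ σ) ∧
      mutualInfo (μ σ) ≤ (((max a (α * b)) ^ 2 / σ ^ 2 : ℝ) : EReal) := fun σ hσ =>
    key a b α σ (K σ) ha hb hα0 (hK σ) hσ (μ σ) (hμ σ) (hprob σ hσ)
  refine ⟨fun σ hσ => (hkey σ hσ).1, ?_⟩
  have hub : ∀ᶠ σ in atTop, mutualInfo (μ σ) ≤ (((max a (α * b)) ^ 2 / σ ^ 2 : ℝ) : EReal) := by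
    filter_upwards [eventually_gt_atTop 0] with σ hσ using (hkey σ hσ).2
  have hlb : ∀ᶠ σ in atTop, (0 : EReal) ≤ mutualInfo (μ σ) := by
    filter_upwards [eventually_gt_atTop 0] with σ hσ using (hkey σ hσ).1.le
  have hreal : Tendsto (fun σ : ℝ => (max a (α * b)) ^ 2 / σ ^ 2) atTop (nhds 0) :=
    Tendsto.div_atTop tendsto_const_nhds (tendsto_pow_atTop two_ne_zero)
  have htends : Tendsto (fun σ : ℝ => (((max a (α * b)) ^ 2 / σ ^ 2 : ℝ) : EReal))
      atTop (nhds 0) := by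
    have hcont := (continuous_coe_real_ereal.tendsto (0 : ℝ)).comp hreal
    simpa [Function.comp_def] using hcont
  exact tendsto_of_tendsto_of_tendsto_of_le_of_le' tendsto_const_nhds htends hlb hub
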